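/- Let x ∈ ℝ^N be fixed and for τ > 0 define p_i(τ) = exp(x_i/τ)/Σ_j exp(x_j/τ), and let H(τ) = -Σ_i p_i(τ) log p_i(τ) be the Shannon entropy. Then dH/dτ = (1/τ³) Σ_i p_i (x_i - μ)², where μ = Σ_i p_i x_i. In particular H is monotonically nondecreasing in τ. -/

import Mathlib

open Real Finset

theorem softmax_entropy_deriv_and_monotone
    (N : ℕ) (x : Fin N → ℝ)
    (p : ℝ → Fin N → ℝ)
    (hp : ∀ t i, p t i = Real.exp (x i / t) / ∑ j, Real.exp (x j / t))
    (H : ℝ → ℝ)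
    (hH : ∀ t, H t = -∑ i, p t i * Real.log (p t i)) :
    (∀ τ : ℝ, 0 < τ →
      HasDerivAt H
        ((1 / τ ^ 3) * ∑ i, p τ i * (x i - ∑ j, p τ j * x j) ^ 2) τ) ∧
    MonotoneOn H (Set.Ioi (0 : ℝ)) := by
  have key : ∀ τ : ℝ, 0 < τ →
      HasDerivAt H ((1 / τ ^ 3) * ∑ i, p τ i * (x i - ∑ j, p τ j * x j) ^ 2) τ := by
    rcases Nat.eq_zero_or_pos N with hN | hN
    · haveI : IsEmpty (Fin N) := by subst hN; infer_instance
      intro τ hτ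
      have hH0 : H = fun _ => (0 : ℝ) := funext fun t => by simp [hH]
      rw [hH0]
      simpa using hasDerivAt_const τ (0 : ℝ)
    · haveI : Nonempty (Fin N) := ⟨⟨0, hN⟩⟩
      intro τ hτ
      have hτ0 : τ ≠ 0 := ne_of_gt hτ
      -- positivity of the partition sum at any point
      have hSpos : ∀ t : ℝ, (0:ℝ) < ∑ j, Real.exp (x j / t) := fun t =>
        Finset.sum_pos (fun i _ => Real.exp_pos _) Finset.univ_nonempty
      -- per-term derivative
      have hterm : ∀ c : ℝ, HasDerivAt (fun t : ℝ => Real.exp (c / t))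
          (Real.exp (c / τ) * (c * -(τ ^ 2)⁻¹)) τ := by
        intro c
        have h1 : HasDerivAt (fun t : ℝ => c / t) (c * -(τ ^ 2)⁻¹) τ := by
          simpa [div_eq_mul_inv] using (hasDerivAt_inv hτ0).const_mul c
        exact h1.exp
      have hS' : HasDerivAt (fun t : ℝ => ∑ j, Real.exp (x j / t))
          (-(∑ j, x j * Real.exp (x j / τ)) / τ ^ 2) τ := by
        have h := HasDerivAt.fun_sum (fun i (_ : i ∈ Finset.univ) => hterm (x i))
        refine h.congr_deriv ?_
        rw [Finset.sum_congr rfl (fun i (_ : i ∈ Finset.univ) =>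
          show Real.exp (x i / τ) * (x i * -(τ ^ 2)⁻¹)
            = (x i * Real.exp (x i / τ)) * (-(τ ^ 2)⁻¹) from by ring), ← Finset.sum_mul]
        ring
      have hA' : HasDerivAt (fun t : ℝ => ∑ j, x j * Real.exp (x j / t))
          (-(∑ j, x j ^ 2 * Real.exp (x j / τ)) / τ ^ 2) τ := by
        have h := HasDerivAt.fun_sum (fun i (_ : i ∈ Finset.univ) =>
          ((hterm (x i)).const_mul (x i)))
        refine h.congr_deriv ?_
        rw [Finset.sum_congr rfl (fun i (_ : i ∈ Finset.univ) =>
          show x i * (Real.exp (x i / τ) * (x i * -(τ ^ 2)⁻¹))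
            = (x i ^ 2 * Real.exp (x i / τ)) * (-(τ ^ 2)⁻¹) from by ring), ← Finset.sum_mul]
        ring
      -- closed form of H on Ioi 0
      have hHeq : ∀ t ∈ Set.Ioi (0:ℝ), H t =
          Real.log (∑ j, Real.exp (x j / t)) -
            (∑ j, x j * Real.exp (x j / t)) / (t * ∑ j, Real.exp (x j / t)) := by
        intro t ht
        have ht0 : t ≠ 0 := ne_of_gt ht
        have hs : (∑ j, Real.exp (x j / t)) ≠ 0 := (hSpos t).ne'
        have hlogp : ∀ i, Real.log (p t i) =
            x i / t - Real.log (∑ j, Real.exp (x j / t)) := fun i => by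
          rw [hp, Real.log_div (Real.exp_ne_zero _) hs, Real.log_exp]
        calc H t = -∑ i, ((x i * Real.exp (x i / t)) * (1 / (t * ∑ j, Real.exp (x j / t)))
              - Real.exp (x i / t) *
                (Real.log (∑ j, Real.exp (x j / t)) / (∑ j, Real.exp (x j / t)))) := by
              rw [hH]
              congr 1
              refine Finset.sum_congr rfl fun i _ => ?_
              rw [hlogp i, hp t i]
              field_simp
          _ = -((∑ j, x j * Real.exp (x j / t)) * (1 / (t * ∑ j, Real.exp (x j / t)))
              - (∑ j, Real.exp (x j / t)) *
                (Real.log (∑ j, Real.exp (x j / t)) / (∑ j, Real.exp (x j / t)))) := by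
              rw [Finset.sum_sub_distrib, ← Finset.sum_mul, ← Finset.sum_mul]
          _ = Real.log (∑ j, Real.exp (x j / t)) -
              (∑ j, x j * Real.exp (x j / t)) / (t * ∑ j, Real.exp (x j / t)) := by
              field_simp
              ring
      -- derivative of the closed form
      have hG : HasDerivAt (fun t : ℝ => Real.log (∑ j, Real.exp (x j / t)) -
            (∑ j, x j * Real.exp (x j / t)) / (t * ∑ j, Real.exp (x j / t)))
          ((1 / τ ^ 3) * ∑ i, p τ i * (x i - ∑ j, p τ j * x j) ^ 2) τ := by
        have hs : (∑ j, Real.exp (x j / τ)) ≠ 0 := (hSpos τ).ne'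
        have hlog := hS'.log hs
        have hden := (hasDerivAt_id τ).fun_mul hS'
        have hne : τ * ∑ j, Real.exp (x j / τ) ≠ 0 := mul_ne_zero hτ0 hs
        have hfrac := hA'.fun_div hden hne
        have hcomb := hlog.fun_sub hfrac
        simp only [id_eq] at hcomb
        have hμ : ∑ j, p τ j * x j =
            (∑ j, x j * Real.exp (x j / τ)) / (∑ j, Real.exp (x j / τ)) :=
          calc ∑ j, p τ j * x j
              = ∑ j, (x j * Real.exp (x j / τ)) / (∑ k, Real.exp (x k / τ)) :=
                Finset.sum_congr rfl fun j _ => by rw [hp]; ring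
            _ = _ := by rw [← Finset.sum_div]
        have hsum : ∑ i, p τ i * (x i - ∑ j, p τ j * x j) ^ 2 =
            ((∑ j, x j ^ 2 * Real.exp (x j / τ))
              - 2 * ((∑ j, x j * Real.exp (x j / τ)) / (∑ j, Real.exp (x j / τ)))
                  * (∑ j, x j * Real.exp (x j / τ))
              + ((∑ j, x j * Real.exp (x j / τ)) / (∑ j, Real.exp (x j / τ))) ^ 2
                  * (∑ j, Real.exp (x j / τ))) / (∑ j, Real.exp (x j / τ)) := by
          calc ∑ i, p τ i * (x i - ∑ j, p τ j * x j) ^ 2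
              = ∑ i, (Real.exp (x i / τ) * (x i -
                  (∑ j, x j * Real.exp (x j / τ)) / (∑ j, Real.exp (x j / τ))) ^ 2)
                    / (∑ j, Real.exp (x j / τ)) := by
                refine Finset.sum_congr rfl fun i _ => ?_
                rw [hp, hμ]
                ring
            _ = (∑ i, Real.exp (x i / τ) * (x i -
                  (∑ j, x j * Real.exp (x j / τ)) / (∑ j, Real.exp (x j / τ))) ^ 2)
                    / (∑ j, Real.exp (x j / τ)) := by rw [← Finset.sum_div]
            _ = _ := by
                congr 1
                calc ∑ i, Real.exp (x i / τ) * (x i -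
                      (∑ j, x j * Real.exp (x j / τ)) / (∑ j, Real.exp (x j / τ))) ^ 2
                    = ∑ i, (x i ^ 2 * Real.exp (x i / τ)
                        - 2 * ((∑ j, x j * Real.exp (x j / τ)) / (∑ j, Real.exp (x j / τ)))
                            * (x i * Real.exp (x i / τ))
                        + ((∑ j, x j * Real.exp (x j / τ)) / (∑ j, Real.exp (x j / τ))) ^ 2
                            * Real.exp (x i / τ)) :=
                      Finset.sum_congr rfl fun i _ => by ring
                  _ = _ := by
                      rw [Finset.sum_add_distrib, Finset.sum_sub_distrib,
                        ← Finset.mul_sum, ← Finset.mul_sum]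
        refine hcomb.congr_deriv ?_
        rw [hsum]
        field_simp
        ring
      exact hG.congr_of_eventuallyEq
        (Filter.eventuallyEq_of_mem (Ioi_mem_nhds hτ) hHeq)
  refine ⟨key, ?_⟩
  apply monotoneOn_of_deriv_nonneg (convex_Ioi 0)
  · exact fun t ht => ((key t ht).continuousAt).continuousWithinAt
  · rw [interior_Ioi]
    exact fun t ht => ((key t ht).differentiableAt).differentiableWithinAt
  · rw [interior_Ioi]
    intro t ht
    rw [(key t ht).deriv]
    have h2 : (0:ℝ) ≤ ∑ i, p t i * (x i - ∑ j, p t j * x j) ^ 2 := by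
      apply Finset.sum_nonneg
      intro i _
      have hpi : 0 ≤ p t i := by
        rw [hp]
        exact div_nonneg (Real.exp_pos _).le
          (Finset.sum_nonneg fun j _ => (Real.exp_pos _).le)
      positivity
    have h1 : (0:ℝ) < t := ht
    positivity
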